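/- arXiv:0811.1254 — 3 statements merged into one kernel-verified Lean document; each statement's English description precedes it below -/
import Mathlib

section
/- Fisher's Inequality: if (X, B) is a 2-(v,k,λ) design with 2 ≤ k < v (non-trivial), then the number of blocks b satisfies b ≥ v. -/
open Finset Matrix

/-- Fisher's inequality: a non-trivial 2-(v,k,λ) design has at least as many
blocks as points. -/
theorem fisher_inequality {X : Type*} [Fintype X] [DecidableEq X]
    (v k lam : ℕ) (B : Finset (Finset X))
    (hv : Fintype.card X = v) (hk : ∀ b ∈ B, b.card = k)
    (h2 : ∀ x y : X, x ≠ y → (B.filter fun b => x ∈ b ∧ y ∈ b).card = lam)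
    (hlam : 0 < lam) (hk2 : 2 ≤ k) (hkv : k < v) :
    v ≤ B.card := by
  classical
  -- replication number
  set r : X → ℕ := fun x => (B.filter fun b => x ∈ b).card with hr
  -- double counting: r x * (k-1) = lam * (v-1)
  have hrep : ∀ x : X, r x * (k - 1) = lam * (v - 1) := by
    intro x
    have hcalc : ∑ y ∈ univ.erase x, (B.filter fun b => x ∈ b ∧ y ∈ b).card
        = ∑ b ∈ B.filter (fun b => x ∈ b), (k - 1) := by
      simp_rw [Finset.card_filter]
      rw [Finset.sum_comm, Finset.sum_filter]
      refine Finset.sum_congr rfl fun b hb => ?_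
      by_cases hx : x ∈ b
      · simp only [hx, true_and, if_true]
        have : ∑ y ∈ univ.erase x, (if y ∈ b then 1 else 0)
            = (b.erase x).card := by
          rw [show b.erase x = (univ.erase x).filter (· ∈ b) by
            ext y; simp [Finset.mem_erase, and_comm], Finset.card_filter]
        rw [this, Finset.card_erase_of_mem hx, hk b hb]
      · simp [hx]
    have hL : ∑ y ∈ univ.erase x, (B.filter fun b => x ∈ b ∧ y ∈ b).card
        = lam * (v - 1) := by
      rw [Finset.sum_congr rfl fun y hy => h2 x y (Ne.symm (Finset.mem_erase.1 hy).1)]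
      simp [Finset.card_erase_of_mem, hv, mul_comm]
    have hR : ∑ b ∈ B.filter (fun b => x ∈ b), (k - 1) = r x * (k - 1) := by
      simp [hr]
    rw [← hL, hcalc, hR]
  -- r x > lam
  have hrlam : ∀ x : X, lam < r x := by
    intro x
    have h1 : lam * (k - 1) < lam * (v - 1) :=
      Nat.mul_lt_mul_of_pos_left (show k - 1 < v - 1 by omega) hlam
    have h0 := hrep x
    have hk1 : 0 < k - 1 := by omega
    by_contra h
    push_neg at h
    have : r x * (k - 1) ≤ lam * (k - 1) := Nat.mul_le_mul_right _ h
    omega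
  -- incidence matrix
  set M : Matrix X B ℝ := Matrix.of fun x b => if x ∈ (b : Finset X) then 1 else 0 with hM
  set A : Matrix X X ℝ := M * Mᵀ with hA
  have hAentry : ∀ x y : X, A x y = if x = y then (r x : ℝ) else (lam : ℝ) := by
    intro x y
    have h1 : A x y = ((B.filter fun b => x ∈ b ∧ y ∈ b).card : ℝ) := by
      simp only [hA, hM, Matrix.mul_apply, Matrix.transpose_apply, Matrix.of_apply]
      rw [Finset.card_filter]
      push_cast
      rw [← Finset.sum_coe_sort B (fun b => if x ∈ b ∧ y ∈ b then (1:ℝ) else 0)]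
      refine Finset.sum_congr rfl fun b _ => ?_
      by_cases hx : x ∈ (b : Finset X) <;> by_cases hy : y ∈ (b : Finset X) <;>
        simp [hx, hy]
    rw [h1]
    by_cases hxy : x = y
    · subst hxy
      simp only [if_true, and_self, hr]
    · rw [if_neg hxy, h2 x y hxy]
  -- A is positive definite
  have hApd : A.PosDef := by
    refine Matrix.posDef_iff_dotProduct_mulVec.mpr ⟨?_, ?_⟩
    · rw [hA]
      simpa using Matrix.isHermitian_mul_conjTranspose_self M
    · intro w hw
      have hquad : star w ⬝ᵥ A *ᵥ w
          = (lam : ℝ) * (∑ x, w x) ^ 2 + ∑ x, ((r x : ℝ) - lam) * (w x) ^ 2 := by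
        simp only [dotProduct, Matrix.mulVec, dotProduct, Pi.star_apply, star_trivial, id_eq, RCLike.star_def, starRingEnd_apply, star, id]
        have : ∀ x, w x * (∑ y, A x y * w y)
            = (lam : ℝ) * w x * (∑ y, w y) + ((r x : ℝ) - lam) * (w x) ^ 2 := by
          intro x
          have : ∀ y, A x y * w y
              = (lam : ℝ) * w y + (if x = y then ((r x : ℝ) - lam) * w y else 0) := by
            intro y
            rw [hAentry x y]
            by_cases hxy : x = y
            · rw [if_pos hxy, if_pos hxy]; ring
            · rw [if_neg hxy, if_neg hxy, add_zero]
          rw [Finset.sum_congr rfl fun y _ => this y, Finset.sum_add_distrib,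
            Finset.sum_ite_eq (Finset.univ) x (fun y => ((r x : ℝ) - lam) * w y)]
          simp only [Finset.mem_univ, if_true]
          rw [← Finset.mul_sum]
          ring
        rw [Finset.sum_congr rfl fun x _ => this x, Finset.sum_add_distrib,
          ← Finset.sum_mul]
        congr 1
        rw [← Finset.mul_sum]
        ring
      rw [hquad]
      have h1 : 0 ≤ (lam : ℝ) * (∑ x, w x) ^ 2 := by positivity
      have h2' : 0 < ∑ x, ((r x : ℝ) - lam) * (w x) ^ 2 := by
        obtain ⟨x0, hx0⟩ := Function.ne_iff.1 hw
        refine Finset.sum_pos' (fun x _ => ?_) ⟨x0, Finset.mem_univ x0, ?_⟩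
        · have h5 : (lam : ℝ) ≤ (r x : ℝ) := by exact_mod_cast (hrlam x).le
          have h6 := sq_nonneg (w x)
          nlinarith
        · have hlt : (lam : ℝ) < (r x0 : ℝ) := by exact_mod_cast hrlam x0
          have hne : w x0 ≠ 0 := hx0
          have : (0:ℝ) < (w x0) ^ 2 := lt_of_le_of_ne (sq_nonneg _) (Ne.symm (pow_ne_zero 2 hne))
          nlinarith
      linarith
  -- rank argument
  have hunit : IsUnit A := (Matrix.isUnit_iff_isUnit_det A).2 hApd.det_pos.ne'.isUnit
  have hrankA : A.rank = Fintype.card X := Matrix.rank_of_isUnit A hunit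
  have h3 : A.rank ≤ M.rank := hA ▸ Matrix.rank_mul_le_left M Mᵀ
  have h4 : M.rank ≤ Fintype.card B := Matrix.rank_le_card_width M
  have h5 : Fintype.card B = B.card := Fintype.card_coe B
  omega
end

section
/- Any binary code with 4096 codewords, of length 24, containing the zero vector, and with minimum distance 8, only has codewords of weights 0, 8, 12, 16, 24, is self-orthogonal, self-dual, and in particular is a linear subspace of F_2^24. -/
open Finset
open scoped symmDiff
abbrev V24 := Fin 24 → ZMod 2
namespace GolayAux
lemma zmod2_cases (a : ZMod 2) : a = 0 ∨ a = 1 := by revert a; decide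
def sup (x : V24) : Finset (Fin 24) := Finset.univ.filter (fun i => x i = 1)
lemma mem_sup {x : V24} {i : Fin 24} : i ∈ sup x ↔ x i = 1 := by simp [sup]
lemma not_mem_sup {x : V24} {i : Fin 24} : i ∉ sup x ↔ x i = 0 := by
  rw [mem_sup]; rcases zmod2_cases (x i) with h | h <;> simp [h]
lemma sup_add (x y : V24) : sup (x + y) = (sup x) ∆ (sup y) := by
  ext i
  simp only [mem_symmDiff, mem_sup, not_mem_sup, Pi.add_apply]
  rcases zmod2_cases (x i) with h | h <;> rcases zmod2_cases (y i) with h' | h' <;> simp [h, h']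

def ind (s : Finset (Fin 24)) : V24 := fun j => if j ∈ s then 1 else 0

lemma sup_ind (s : Finset (Fin 24)) : sup (ind s) = s := by
  ext j; simp only [mem_sup, ind]; split <;> simp_all

lemma ind_sup (x : V24) : ind (sup x) = x := by
  funext j
  rcases zmod2_cases (x j) with h | h <;> simp [ind, mem_sup, h]

lemma add_self (x : V24) : x + x = 0 := by
  funext j; rcases zmod2_cases (x j) with h | h <;> · simp [Pi.add_apply, h]; try decide

def Bl (c : V24) (i : Fin 24) : Finset V24 :=
  univ.filter (fun w => w i = 0 ∧ (sup (w + Function.update c i 0)).card ≤ 3)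

def Tset (i : Fin 24) : Finset (Finset (Fin 24)) :=
  univ.filter (fun s => i ∉ s ∧ s.card ≤ 3)

lemma card_Tset (i : Fin 24) : (Tset i).card = 2048 := by
  have h1 : Tset i = (Finset.range 4).biUnion
      (fun j => (Finset.univ.erase i).powersetCard j) := by
    ext s
    simp only [Tset, mem_filter, mem_univ, true_and, mem_biUnion, mem_range,
      mem_powersetCard]
    constructor
    · rintro ⟨hi, hc⟩
      exact ⟨s.card, by omega, fun j hj => Finset.mem_erase.mpr ⟨fun h => hi (h ▸ hj), mem_univ j⟩, rfl⟩
    · rintro ⟨j, hj, hs, rfl⟩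
      exact ⟨fun hi => (Finset.mem_erase.mp (hs hi)).1 rfl, by omega⟩
  rw [h1, Finset.card_biUnion]
  · have hce : (Finset.univ.erase i).card = 23 := by
      rw [Finset.card_erase_of_mem (mem_univ i), Finset.card_univ]; rfl
    have : ∀ j, ((Finset.univ.erase i).powersetCard j).card = Nat.choose 23 j := by
      intro j; rw [Finset.card_powersetCard, hce]
    simp only [Finset.sum_range_succ, this]
    rfl
  · intro a _ b _ hab
    apply Finset.disjoint_left.mpr
    intro s hs hs'
    rw [mem_powersetCard] at hs hs'
    exact hab (hs.2 ▸ hs'.2 ▸ rfl)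

lemma card_Bl (c : V24) (i : Fin 24) : (Bl c i).card = 2048 := by
  rw [← card_Tset i]
  set u : V24 := Function.update c i 0 with hu
  have hui : u i = 0 := by simp [hu]
  apply Finset.card_nbij' (fun w => sup (w + u)) (fun s => ind s + u)
  · intro w hw
    simp only [Finset.mem_coe, Bl, mem_filter, mem_univ, true_and] at hw
    simp only [Finset.mem_coe, Tset, mem_filter, mem_univ, true_and]
    refine ⟨?_, hw.2⟩
    rw [not_mem_sup]
    simp [hw.1, hui]
  · intro s hs
    simp only [Finset.mem_coe, Tset, mem_filter, mem_univ, true_and] at hs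
    simp only [Finset.mem_coe, Bl, mem_filter, mem_univ, true_and]
    constructor
    · simp [ind, hs.1, hui]
    · have : ind s + u + u = ind s := by
        rw [add_assoc, add_self, add_zero]
      rw [this, sup_ind]
      exact hs.2
  · intro w _
    dsimp only; rw [ind_sup, add_assoc, add_self, add_zero]
  · intro s _
    dsimp only; rw [add_assoc, add_self, add_zero, sup_ind]

end GolayAux

namespace GolayAux
open Finset
open scoped symmDiff

def GoodF (CF : Finset V24) : Prop :=
  CF.card = 4096 ∧ (0:V24) ∈ CF ∧ ∀ x ∈ CF, ∀ y ∈ CF, x ≠ y → 8 ≤ (sup (x + y)).card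

lemma Bl_disjoint {CF : Finset V24} (hG : GoodF CF) {c c' : V24} (hc : c ∈ CF)
    (hc' : c' ∈ CF) (hne : c ≠ c') (i : Fin 24) : Disjoint (Bl c i) (Bl c' i) := by
  rw [Finset.disjoint_left]
  intro w hw hw'
  simp only [Bl, mem_filter, mem_univ, true_and] at hw hw'
  set u : V24 := Function.update c i 0 with hu
  set u' : V24 := Function.update c' i 0 with hu'
  have h8 : 8 ≤ (sup (c + c')).card := hG.2.2 c hc c' hc' hne
  have hsub : sup (c + c') ⊆ insert i ((sup (w + u)) ∪ (sup (w + u'))) := by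
    intro j hj
    rcases eq_or_ne j i with rfl | hji
    · exact Finset.mem_insert_self _ _
    · apply Finset.mem_insert_of_mem
      have huu : (u + u') j = (c + c') j := by
        simp [hu, hu', Pi.add_apply, Function.update_of_ne hji]
      have : u + u' = (w + u) + (w + u') := by
        rw [show (w+u) + (w+u') = (w+w) + (u+u') by ring, add_self, zero_add]
      have hj' : j ∈ sup ((w + u) + (w + u')) := by
        rw [← this, mem_sup, huu]; exact mem_sup.mp hj
      rw [sup_add] at hj'
      rw [mem_symmDiff] at hj'
      rcases hj' with ⟨h1, _⟩ | ⟨h1, _⟩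
      · exact Finset.mem_union_left _ h1
      · exact Finset.mem_union_right _ h1
  have := Finset.card_le_card hsub
  have h1 := Finset.card_insert_le i ((sup (w + u)) ∪ (sup (w + u')))
  have h2 := Finset.card_union_le (sup (w + u)) (sup (w + u'))
  omega

lemma covering {CF : Finset V24} (hG : GoodF CF) (i : Fin 24) (v : V24) (hv : v i = 0) :
    ∃ c ∈ CF, (sup (v + Function.update c i 0)).card ≤ 3 := by
  classical
  set Hs : Finset V24 := univ.filter (fun w : V24 => w i = 0) with hHs
  have hH : Hs.card = 2 ^ 23 := by
    have : Hs.card = ((Finset.univ.erase i).powerset).card := by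
      apply Finset.card_nbij' (fun w => sup w) (fun s => ind s)
      · intro w hw
        simp only [Finset.mem_coe, hHs, mem_filter, mem_univ, true_and] at hw
        rw [Finset.mem_coe, mem_powerset, Finset.subset_erase]
        exact ⟨Finset.subset_univ _, not_mem_sup.mpr hw⟩
      · intro s hs
        rw [Finset.mem_coe, mem_powerset, Finset.subset_erase] at hs
        simp only [Finset.mem_coe, hHs, mem_filter, mem_univ, true_and]
        rw [← not_mem_sup, sup_ind]
        exact hs.2
      · intro w _; exact ind_sup w
      · intro s _; exact sup_ind s
    rw [this, Finset.card_powerset, Finset.card_erase_of_mem (mem_univ i), Finset.card_univ]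
    rfl
  have hsub : CF.biUnion (fun c => Bl c i) ⊆ Hs := by
    intro w hw
    rw [Finset.mem_biUnion] at hw
    obtain ⟨c, _, hwc⟩ := hw
    simp only [Bl, mem_filter, mem_univ, true_and] at hwc
    simp only [hHs, mem_filter, mem_univ, true_and]
    exact hwc.1
  have hcard : (CF.biUnion (fun c => Bl c i)).card = 2 ^ 23 := by
    rw [Finset.card_biUnion (fun c hc c' hc' hne => Bl_disjoint hG hc hc' hne i)]
    rw [Finset.sum_congr rfl (fun c _ => card_Bl c i), Finset.sum_const, hG.1]
    rfl
  have heq : CF.biUnion (fun c => Bl c i) = Hs :=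
    Finset.eq_of_subset_of_card_le hsub (by omega)
  have hv' : v ∈ Hs := by simp only [hHs, mem_filter, mem_univ, true_and]; exact hv
  rw [← heq, Finset.mem_biUnion] at hv'
  obtain ⟨c, hc, hvc⟩ := hv'
  simp only [Bl, mem_filter, mem_univ, true_and] at hvc
  exact ⟨c, hc, hvc.2⟩

end GolayAux

namespace GolayAux
open Finset
open scoped symmDiff

lemma card_symmDiff (A B : Finset (Fin 24)) :
    (A ∆ B).card + 2 * (A ∩ B).card = A.card + B.card := by
  rw [symmDiff_def, Finset.sup_eq_union]
  rw [Finset.card_union_of_disjoint (disjoint_sdiff_sdiff)]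
  have h1 : (A \ B).card + (A ∩ B).card = A.card := Finset.card_sdiff_add_card_inter A B
  have h2 : (B \ A).card + (B ∩ A).card = B.card := Finset.card_sdiff_add_card_inter B A
  rw [Finset.inter_comm] at h2
  omega

def Oc (CF : Finset V24) : Finset (Finset (Fin 24)) :=
  (CF.image sup).filter (fun B => B.card = 8)

lemma mem_Oc {CF : Finset V24} {B : Finset (Fin 24)} :
    B ∈ Oc CF ↔ (∃ c ∈ CF, sup c = B) ∧ B.card = 8 := by
  simp [Oc, mem_filter, Finset.mem_image]

lemma steiner_exists {CF : Finset V24} (hG : GoodF CF) {S : Finset (Fin 24)}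
    (hS : S.card = 5) : ∃ B ∈ Oc CF, S ⊆ B := by
  classical
  have hSne : S.Nonempty := Finset.card_pos.mp (by omega)
  obtain ⟨i, hi⟩ := hSne
  set s0 := S.erase i with hs0
  have hs0c : s0.card = 4 := by rw [hs0, Finset.card_erase_of_mem hi, hS]
  have hs0i : i ∉ s0 := Finset.notMem_erase i S
  set v := ind s0 with hv
  have hvi : v i = 0 := by simp [hv, ind, hs0i]
  obtain ⟨c, hc, hD⟩ := covering hG i v hvi
  set u : V24 := Function.update c i 0 with hu
  set D := sup (v + u) with hDdef
  have hsupv : sup v = s0 := sup_ind s0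
  -- c ≠ 0
  have hc0 : c ≠ 0 := by
    rintro rfl
    have h0 : u = 0 := by
      funext j; simp [hu, Function.update_apply]
    have hD4 : D = s0 := by rw [hDdef, h0, add_zero, hsupv]
    rw [hD4] at hD
    omega
  have h8 : 8 ≤ (sup c).card := by
    have := hG.2.2 0 hG.2.1 c hc (Ne.symm hc0)
    rwa [zero_add] at this
  -- sup u = erase i (sup c)
  have hsupu : sup u = (sup c).erase i := by
    ext j
    rw [mem_sup, Finset.mem_erase, mem_sup, hu, Function.update_apply]
    split
    · rename_i h; subst h; simp
    · rename_i h; simp [h]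
  -- sup u = s0 ∆ D
  have hsymm : sup u = s0 ∆ D := by
    have : u = v + (v + u) := by
      rw [← add_assoc, add_self, zero_add]
    rw [this, sup_add, hsupv]
  -- cards
  have hDc : D.card ≤ 3 := hD
  have hsd := card_symmDiff s0 D
  have hcsub : sup c ⊆ insert i (sup u) := by
    intro j hj
    rcases eq_or_ne j i with rfl | hji
    · exact Finset.mem_insert_self _ _
    · exact Finset.mem_insert_of_mem (by rw [hsupu]; exact Finset.mem_erase.mpr ⟨hji, hj⟩)
  have hcard_le := Finset.card_le_card hcsub
  have hins := Finset.card_insert_le i (sup u)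
  have hu7 : (sup u).card = 7 ∧ (s0 ∩ D).card = 0 := by
    have h1 : (sup u).card = (s0 ∆ D).card := by rw [hsymm]
    constructor <;> omega
  have hinter : s0 ∩ D = ∅ := Finset.card_eq_zero.mp hu7.2
  have hs0sub : s0 ⊆ sup u := by
    rw [hsymm]
    intro j hj
    rw [mem_symmDiff]
    left
    refine ⟨hj, fun hjD => ?_⟩
    have : j ∈ s0 ∩ D := Finset.mem_inter.mpr ⟨hj, hjD⟩
    rw [hinter] at this
    exact absurd this (Finset.notMem_empty j)
  have hic : i ∈ sup c := by
    by_contra hic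
    have : u = c := by
      funext j
      rw [hu, Function.update_apply]
      split
      · rename_i h; subst h; exact (not_mem_sup.mp hic).symm
      · rfl
    rw [this] at hu7
    omega
  have hcc : (sup c).card = 8 := by omega
  refine ⟨sup c, mem_Oc.mpr ⟨⟨c, hc, rfl⟩, hcc⟩, ?_⟩
  have : S = insert i s0 := by
    rw [hs0, Finset.insert_erase hi]
  rw [this]
  intro j hj
  rcases Finset.mem_insert.mp hj with rfl | hj'
  · exact hic
  · have : j ∈ sup u := hs0sub hj'
    rw [hsupu] at this
    exact Finset.mem_of_mem_erase this

lemma steiner_unique {CF : Finset V24} (hG : GoodF CF) {S B B' : Finset (Fin 24)}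
    (hS : S.card = 5) (hB : B ∈ Oc CF) (hB' : B' ∈ Oc CF) (h1 : S ⊆ B) (h2 : S ⊆ B') :
    B = B' := by
  obtain ⟨⟨c, hc, rfl⟩, hc8⟩ := mem_Oc.mp hB
  obtain ⟨⟨c', hc', rfl⟩, hc8'⟩ := mem_Oc.mp hB'
  rcases eq_or_ne c c' with rfl | hne
  · rfl
  by_contra _
  have h8 := hG.2.2 c hc c' hc' hne
  rw [sup_add] at h8
  have hsd := card_symmDiff (sup c) (sup c')
  have hint : 5 ≤ (sup c ∩ sup c').card := by
    have : S ⊆ sup c ∩ sup c' := Finset.subset_inter h1 h2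
    calc 5 = S.card := hS.symm
    _ ≤ _ := Finset.card_le_card this
  omega

end GolayAux

namespace GolayAux
open Finset

def lam (CF : Finset V24) (T : Finset (Fin 24)) : ℕ :=
  ((Oc CF).filter (fun B => T ⊆ B)).card

lemma lam5 {CF : Finset V24} (hG : GoodF CF) {T : Finset (Fin 24)} (hT : T.card = 5) :
    lam CF T = 1 := by
  obtain ⟨B, hB, hTB⟩ := steiner_exists hG hT
  rw [lam, Finset.card_eq_one]
  refine ⟨B, ?_⟩
  ext B'
  simp only [mem_filter, Finset.mem_singleton]
  constructor
  · rintro ⟨hB', hTB'⟩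
    exact steiner_unique hG hT hB' hB hTB' hTB
  · rintro rfl
    exact ⟨hB, hTB⟩

lemma lam_step {CF : Finset V24} (j : ℕ) (hj : j < 5) {Lnext : ℕ}
    (hnext : ∀ T : Finset (Fin 24), T.card = j + 1 → lam CF T = Lnext)
    {T : Finset (Fin 24)} (hT : T.card = j) :
    (8 - j) * lam CF T = (24 - j) * Lnext := by
  classical
  set F := (Oc CF).filter (fun B => T ⊆ B) with hF
  have key : ∑ B ∈ F, (B \ T).card = ∑ p ∈ Finset.univ \ T, (F.filter (fun B => p ∈ B)).card := by
    have h1 : ∀ B ∈ F, (B \ T).card = ((Finset.univ \ T).filter (fun p => p ∈ B)).card := by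
      intro B _
      congr 1
      ext p
      simp only [Finset.mem_sdiff, mem_filter, mem_univ, true_and]
      tauto
    rw [Finset.sum_congr rfl h1]
    simp only [Finset.card_filter]
    exact Finset.sum_comm
  have hL : ∑ B ∈ F, (B \ T).card = F.card * (8 - j) := by
    rw [Finset.sum_congr rfl (fun B hB => ?_), Finset.sum_const, smul_eq_mul]
    rw [hF, mem_filter] at hB
    obtain ⟨hB1, hTB⟩ := hB
    rw [Finset.card_sdiff_of_subset hTB, (mem_Oc.mp hB1).2, hT]
  have hR : ∀ p ∈ Finset.univ \ T, (F.filter (fun B => p ∈ B)).card = Lnext := by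
    intro p hp
    rw [Finset.mem_sdiff] at hp
    have : F.filter (fun B => p ∈ B) = (Oc CF).filter (fun B => insert p T ⊆ B) := by
      rw [hF, Finset.filter_filter]
      apply Finset.filter_congr
      intro B _
      simp only [Finset.insert_subset_iff]
      tauto
    rw [this]
    exact hnext (insert p T) (by rw [Finset.card_insert_of_notMem hp.2, hT])
  have hcardsd : (Finset.univ \ T).card = 24 - j := by
    rw [Finset.card_sdiff_of_subset (Finset.subset_univ T), Finset.card_univ, hT]
    rfl
  rw [hL] at key
  rw [Finset.sum_congr rfl hR, Finset.sum_const, smul_eq_mul, hcardsd] at key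
  rw [lam, ← hF, mul_comm]
  exact key

lemma lam4 {CF : Finset V24} (hG : GoodF CF) {T : Finset (Fin 24)} (hT : T.card = 4) :
    lam CF T = 5 := by
  have := lam_step 4 (by omega) (fun T hT => lam5 hG hT) hT
  omega

lemma lam3 {CF : Finset V24} (hG : GoodF CF) {T : Finset (Fin 24)} (hT : T.card = 3) :
    lam CF T = 21 := by
  have := lam_step 3 (by omega) (fun T hT => lam4 hG hT) hT
  omega

lemma lam2 {CF : Finset V24} (hG : GoodF CF) {T : Finset (Fin 24)} (hT : T.card = 2) :
    lam CF T = 77 := by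
  have := lam_step 2 (by omega) (fun T hT => lam3 hG hT) hT
  omega

lemma lam1 {CF : Finset V24} (hG : GoodF CF) {T : Finset (Fin 24)} (hT : T.card = 1) :
    lam CF T = 253 := by
  have := lam_step 1 (by omega) (fun T hT => lam2 hG hT) hT
  omega

lemma lam0 {CF : Finset V24} (hG : GoodF CF) {T : Finset (Fin 24)} (hT : T.card = 0) :
    lam CF T = 759 := by
  have := lam_step 0 (by omega) (fun T hT => lam1 hG hT) hT
  omega

end GolayAux

namespace GolayAux
open Finset
open scoped symmDiff

def Lfun : ℕ → ℕ
  | 0 => 759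
  | 1 => 253
  | 2 => 77
  | 3 => 21
  | 4 => 5
  | 5 => 1
  | _ => 0

lemma lamAll {CF : Finset V24} (hG : GoodF CF) {j : ℕ} (hj : j ≤ 5)
    {T : Finset (Fin 24)} (hT : T.card = j) : lam CF T = Lfun j := by
  interval_cases j
  · exact lam0 hG hT
  · exact lam1 hG hT
  · exact lam2 hG hT
  · exact lam3 hG hT
  · exact lam4 hG hT
  · exact lam5 hG hT

lemma moment {CF : Finset V24} (hG : GoodF CF) (Y : Finset (Fin 24)) {j : ℕ} (hj : j ≤ 5) :
    ∑ B ∈ Oc CF, Nat.choose (B ∩ Y).card j = Nat.choose Y.card j * Lfun j := by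
  classical
  have h1 : ∀ B ∈ Oc CF, Nat.choose (B ∩ Y).card j
      = ((Y.powersetCard j).filter (fun T => T ⊆ B)).card := by
    intro B _
    have : (Y.powersetCard j).filter (fun T => T ⊆ B) = (B ∩ Y).powersetCard j := by
      ext T
      simp only [mem_filter, Finset.mem_powersetCard, Finset.subset_inter_iff]
      tauto
    rw [this, Finset.card_powersetCard]
  rw [Finset.sum_congr rfl h1]
  simp only [Finset.card_filter]
  rw [Finset.sum_comm]
  have h2 : ∀ T ∈ Y.powersetCard j,
      (∑ B ∈ Oc CF, if T ⊆ B then 1 else 0) = Lfun j := by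
    intro T hT
    rw [Finset.mem_powersetCard] at hT
    rw [← Finset.card_filter]
    exact lamAll hG hj hT.2
  rw [Finset.sum_congr rfl h2, Finset.sum_const, smul_eq_mul, Finset.card_powersetCard]

lemma master {CF : Finset V24} (hG : GoodF CF) {y : V24} (hy : y ∈ CF) (P : ℕ → Prop)
    (hP : ∀ c ∈ CF, c ≠ y → P ((sup (c + y)).card)) :
    ∃ n : ℕ → ℕ,
      (∀ j ≤ 5, ∑ k ∈ Finset.range 9, n k * Nat.choose k j
          = Nat.choose (sup y).card j * Lfun j) ∧
      (∀ k, n k ≠ 0 →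
        ((sup y).card = 8 ∧ k = 8) ∨
        ∃ d, 8 + (sup y).card = d + 2 * k ∧ 8 ≤ d ∧ d ≤ 24 ∧
          (d = 24 → (sup y).card = 16) ∧ P d) := by
  classical
  set Y := sup y with hY
  refine ⟨fun k => ((Oc CF).filter (fun B => (B ∩ Y).card = k)).card, ?_, ?_⟩
  · intro j hj
    have hmaps : ∀ B ∈ Oc CF, (B ∩ Y).card ∈ Finset.range 9 := by
      intro B hB
      rw [Finset.mem_range]
      have h1 : (B ∩ Y).card ≤ B.card := Finset.card_le_card Finset.inter_subset_left
      have h2 := (mem_Oc.mp hB).2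
      omega
    have hfib := Finset.sum_fiberwise_of_maps_to hmaps
      (fun B => Nat.choose (B ∩ Y).card j)
    rw [← moment hG Y hj, ← hfib]
    apply Finset.sum_congr rfl
    intro k _
    have : ∀ B ∈ (Oc CF).filter (fun B => (B ∩ Y).card = k),
        Nat.choose (B ∩ Y).card j = Nat.choose k j := by
      intro B hB
      rw [(Finset.mem_filter.mp hB).2]
    rw [Finset.sum_congr rfl this, Finset.sum_const, smul_eq_mul]
  · intro k hk
    have hk' : ((Oc CF).filter (fun B => (B ∩ Y).card = k)).Nonempty :=
      Finset.card_ne_zero.mp hk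
    obtain ⟨B, hB⟩ := hk'
    rw [Finset.mem_filter] at hB
    obtain ⟨hBOc, hBk⟩ := hB
    obtain ⟨⟨c, hc, rfl⟩, hc8⟩ := mem_Oc.mp hBOc
    rcases eq_or_ne c y with rfl | hne
    · left
      exact ⟨hc8, by rw [← hBk, Finset.inter_self]; exact hc8⟩
    · right
      refine ⟨(sup (c + y)).card, ?_, hG.2.2 c hc y hy hne, ?_, ?_, hP c hc hne⟩
      · have := card_symmDiff (sup c) Y
        rw [← sup_add, hBk, hc8] at this
        omega
      · have : (sup (c+y)).card ≤ (Finset.univ : Finset (Fin 24)).card :=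
          Finset.card_le_card (Finset.subset_univ _)
        simpa using this
      · intro h24
        have huniv : sup (c + y) = Finset.univ := by
          apply Finset.eq_univ_of_card
          rw [h24]; rfl
        have hdisj : sup c ∩ Y = ∅ := by
          ext p
          simp only [Finset.mem_inter, Finset.notMem_empty, iff_false]
          rintro ⟨hp1, hp2⟩
          have : p ∈ sup (c + y) := huniv ▸ Finset.mem_univ p
          rw [sup_add, mem_symmDiff] at this
          rw [← hY] at this
          tauto
        have := card_symmDiff (sup c) Y
        rw [← sup_add, h24, hdisj, hc8] at this
        simp at this
        omega

end GolayAux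

namespace GolayAux
open Finset

lemma translate {CF : Finset V24} (hG : GoodF CF) {y : V24} (hy : y ∈ CF) :
    GoodF (CF.image (fun x => x + y)) := by
  obtain ⟨hcard, h0, hd⟩ := hG
  have hinj : Function.Injective (fun x : V24 => x + y) := fun a b h => by
    have := congrArg (fun t => t + y) h
    simpa [add_assoc, add_self, add_zero] using this
  refine ⟨by rw [Finset.card_image_of_injective _ hinj, hcard], ?_, ?_⟩
  · rw [Finset.mem_image]
    exact ⟨y, hy, add_self y⟩
  · intro a ha b hb hne
    rw [Finset.mem_image] at ha hb
    obtain ⟨x, hx, rfl⟩ := ha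
    obtain ⟨x', hx', rfl⟩ := hb
    have hxx : x ≠ x' := fun h => hne (by rw [h])
    have : (fun t => t + y) x + (fun t => t + y) x' = x + x' := by
      simp only
      rw [show x + y + (x' + y) = (x + x') + (y + y) by abel, add_self, add_zero]
    rw [this]
    exact hd x hx x' hx' hxx

lemma mem_translate {CF : Finset V24} {y : V24} {c : V24} (hc : c ∈ CF) :
    c + y ∈ CF.image (fun x => x + y) := Finset.mem_image_of_mem _ hc

def NoW (w : ℕ) : Prop := ∀ CF : Finset V24, GoodF CF → ∀ z ∈ CF, (sup z).card ≠ w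

lemma no9 : NoW 9 := by
  intro CF hG z hz hw
  obtain ⟨n, heq, hk⟩ := master hG hz (fun _ => True) (fun _ _ _ => trivial)
  rw [hw] at heq hk
  have e4 := heq 4 (by norm_num)
  have e5 := heq 5 (by norm_num)
  simp only [Finset.sum_range_succ, Finset.sum_range_zero, Lfun] at e4 e5
  norm_num [Nat.choose] at e4 e5
  have z5 : n 5 = 0 := by
    by_contra h
    rcases hk 5 h with ⟨h8, _⟩ | ⟨d, hd1, hd2, _⟩ <;> omega
  have z6 : n 6 = 0 := by
    by_contra h
    rcases hk 6 h with ⟨h8, _⟩ | ⟨d, hd1, hd2, _⟩ <;> omega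
  have z7 : n 7 = 0 := by
    by_contra h
    rcases hk 7 h with ⟨h8, _⟩ | ⟨d, hd1, hd2, _⟩ <;> omega
  have z8 : n 8 = 0 := by
    by_contra h
    rcases hk 8 h with ⟨h8, _⟩ | ⟨d, hd1, hd2, _⟩ <;> omega
  omega

end GolayAux

namespace GolayAux
open Finset

lemma no10 : NoW 10 := by
  intro CF hG z hz hw
  obtain ⟨n, heq, hk⟩ := master hG hz (fun _ => True)
    (fun _ _ _ => trivial)
  rw [hw] at heq hk
  have e0 := heq 0 (by norm_num)
  have e1 := heq 1 (by norm_num)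
  have e2 := heq 2 (by norm_num)
  have e3 := heq 3 (by norm_num)
  have e4 := heq 4 (by norm_num)
  have e5 := heq 5 (by norm_num)
  simp only [Finset.sum_range_succ, Finset.sum_range_zero, Lfun] at e0 e1 e2 e3 e4 e5
  norm_num [Nat.choose] at e0 e1 e2 e3 e4 e5
  have z6 : n 6 = 0 := by
    by_contra h
    rcases hk 6 h with ⟨h8, -⟩ | ⟨d, hd1, hd2, hd3, hd4, -⟩
    · omega
    · rcases eq_or_ne d 24 with h24 | h24
      · exact absurd (hd4 h24) (by norm_num)
      · omega
  have z7 : n 7 = 0 := by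
    by_contra h
    rcases hk 7 h with ⟨h8, -⟩ | ⟨d, hd1, hd2, hd3, hd4, -⟩
    · omega
    · rcases eq_or_ne d 24 with h24 | h24
      · exact absurd (hd4 h24) (by norm_num)
      · omega
  have z8 : n 8 = 0 := by
    by_contra h
    rcases hk 8 h with ⟨h8, -⟩ | ⟨d, hd1, hd2, hd3, hd4, -⟩
    · omega
    · rcases eq_or_ne d 24 with h24 | h24
      · exact absurd (hd4 h24) (by norm_num)
      · omega
  omega

lemma no11 : NoW 11 := by
  intro CF hG z hz hw
  obtain ⟨n, heq, hk⟩ := master hG hz (fun _ => True)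
    (fun _ _ _ => trivial)
  rw [hw] at heq hk
  have e0 := heq 0 (by norm_num)
  have e1 := heq 1 (by norm_num)
  have e2 := heq 2 (by norm_num)
  have e3 := heq 3 (by norm_num)
  have e4 := heq 4 (by norm_num)
  have e5 := heq 5 (by norm_num)
  simp only [Finset.sum_range_succ, Finset.sum_range_zero, Lfun] at e0 e1 e2 e3 e4 e5
  norm_num [Nat.choose] at e0 e1 e2 e3 e4 e5
  have z6 : n 6 = 0 := by
    by_contra h
    rcases hk 6 h with ⟨h8, -⟩ | ⟨d, hd1, hd2, hd3, hd4, -⟩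
    · omega
    · rcases eq_or_ne d 24 with h24 | h24
      · exact absurd (hd4 h24) (by norm_num)
      · omega
  have z7 : n 7 = 0 := by
    by_contra h
    rcases hk 7 h with ⟨h8, -⟩ | ⟨d, hd1, hd2, hd3, hd4, -⟩
    · omega
    · rcases eq_or_ne d 24 with h24 | h24
      · exact absurd (hd4 h24) (by norm_num)
      · omega
  have z8 : n 8 = 0 := by
    by_contra h
    rcases hk 8 h with ⟨h8, -⟩ | ⟨d, hd1, hd2, hd3, hd4, -⟩
    · omega
    · rcases eq_or_ne d 24 with h24 | h24
      · exact absurd (hd4 h24) (by norm_num)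
      · omega
  omega

lemma no13 : NoW 13 := by
  intro CF hG z hz hw
  obtain ⟨n, heq, hk⟩ := master hG hz (fun _ => True)
    (fun _ _ _ => trivial)
  rw [hw] at heq hk
  have e0 := heq 0 (by norm_num)
  have e1 := heq 1 (by norm_num)
  have e2 := heq 2 (by norm_num)
  have e3 := heq 3 (by norm_num)
  have e4 := heq 4 (by norm_num)
  have e5 := heq 5 (by norm_num)
  simp only [Finset.sum_range_succ, Finset.sum_range_zero, Lfun] at e0 e1 e2 e3 e4 e5
  norm_num [Nat.choose] at e0 e1 e2 e3 e4 e5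
  have z7 : n 7 = 0 := by
    by_contra h
    rcases hk 7 h with ⟨h8, -⟩ | ⟨d, hd1, hd2, hd3, hd4, -⟩
    · omega
    · rcases eq_or_ne d 24 with h24 | h24
      · exact absurd (hd4 h24) (by norm_num)
      · omega
  have z8 : n 8 = 0 := by
    by_contra h
    rcases hk 8 h with ⟨h8, -⟩ | ⟨d, hd1, hd2, hd3, hd4, -⟩
    · omega
    · rcases eq_or_ne d 24 with h24 | h24
      · exact absurd (hd4 h24) (by norm_num)
      · omega
  omega

lemma no14 : NoW 14 := by
  intro CF hG z hz hw
  obtain ⟨n, heq, hk⟩ := master hG hz (fun d => d ≠ 10)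
    (fun c hc hne => no10 _ (translate hG hz) _ (mem_translate hc))
  rw [hw] at heq hk
  have e0 := heq 0 (by norm_num)
  have e1 := heq 1 (by norm_num)
  have e2 := heq 2 (by norm_num)
  have e3 := heq 3 (by norm_num)
  have e4 := heq 4 (by norm_num)
  have e5 := heq 5 (by norm_num)
  simp only [Finset.sum_range_succ, Finset.sum_range_zero, Lfun] at e0 e1 e2 e3 e4 e5
  norm_num [Nat.choose] at e0 e1 e2 e3 e4 e5
  have z6 : n 6 = 0 := by
    by_contra h
    rcases hk 6 h with ⟨h8, -⟩ | ⟨d, hd1, hd2, hd3, hd4, hp0⟩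
    · omega
    · rcases eq_or_ne d 24 with h24 | h24
      · exact absurd (hd4 h24) (by norm_num)
      · omega
  have z8 : n 8 = 0 := by
    by_contra h
    rcases hk 8 h with ⟨h8, -⟩ | ⟨d, hd1, hd2, hd3, hd4, hp0⟩
    · omega
    · rcases eq_or_ne d 24 with h24 | h24
      · exact absurd (hd4 h24) (by norm_num)
      · omega
  omega

lemma no15 : NoW 15 := by
  intro CF hG z hz hw
  obtain ⟨n, heq, hk⟩ := master hG hz (fun d => d ≠ 9 ∧ d ≠ 11 ∧ d ≠ 13)
    (fun c hc hne => ⟨no9 _ (translate hG hz) _ (mem_translate hc), no11 _ (translate hG hz) _ (mem_translate hc), no13 _ (translate hG hz) _ (mem_translate hc)⟩)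
  rw [hw] at heq hk
  have e0 := heq 0 (by norm_num)
  have e1 := heq 1 (by norm_num)
  have e2 := heq 2 (by norm_num)
  have e3 := heq 3 (by norm_num)
  have e4 := heq 4 (by norm_num)
  have e5 := heq 5 (by norm_num)
  simp only [Finset.sum_range_succ, Finset.sum_range_zero, Lfun] at e0 e1 e2 e3 e4 e5
  norm_num [Nat.choose] at e0 e1 e2 e3 e4 e5
  have z5 : n 5 = 0 := by
    by_contra h
    rcases hk 5 h with ⟨h8, -⟩ | ⟨d, hd1, hd2, hd3, hd4, hp0, hp1, hp2⟩
    · omega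
    · rcases eq_or_ne d 24 with h24 | h24
      · exact absurd (hd4 h24) (by norm_num)
      · omega
  have z6 : n 6 = 0 := by
    by_contra h
    rcases hk 6 h with ⟨h8, -⟩ | ⟨d, hd1, hd2, hd3, hd4, hp0, hp1, hp2⟩
    · omega
    · rcases eq_or_ne d 24 with h24 | h24
      · exact absurd (hd4 h24) (by norm_num)
      · omega
  have z7 : n 7 = 0 := by
    by_contra h
    rcases hk 7 h with ⟨h8, -⟩ | ⟨d, hd1, hd2, hd3, hd4, hp0, hp1, hp2⟩
    · omega
    · rcases eq_or_ne d 24 with h24 | h24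
      · exact absurd (hd4 h24) (by norm_num)
      · omega
  have z8 : n 8 = 0 := by
    by_contra h
    rcases hk 8 h with ⟨h8, -⟩ | ⟨d, hd1, hd2, hd3, hd4, hp0, hp1, hp2⟩
    · omega
    · rcases eq_or_ne d 24 with h24 | h24
      · exact absurd (hd4 h24) (by norm_num)
      · omega
  omega

lemma no17 : NoW 17 := by
  intro CF hG z hz hw
  obtain ⟨n, heq, hk⟩ := master hG hz (fun d => d ≠ 9 ∧ d ≠ 11 ∧ d ≠ 13 ∧ d ≠ 15)
    (fun c hc hne => ⟨no9 _ (translate hG hz) _ (mem_translate hc), no11 _ (translate hG hz) _ (mem_translate hc), no13 _ (translate hG hz) _ (mem_translate hc), no15 _ (translate hG hz) _ (mem_translate hc)⟩)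
  rw [hw] at heq hk
  have e0 := heq 0 (by norm_num)
  have e1 := heq 1 (by norm_num)
  have e2 := heq 2 (by norm_num)
  have e3 := heq 3 (by norm_num)
  have e4 := heq 4 (by norm_num)
  have e5 := heq 5 (by norm_num)
  simp only [Finset.sum_range_succ, Finset.sum_range_zero, Lfun] at e0 e1 e2 e3 e4 e5
  norm_num [Nat.choose] at e0 e1 e2 e3 e4 e5
  have z0 : n 0 = 0 := by
    by_contra h
    rcases hk 0 h with ⟨h8, -⟩ | ⟨d, hd1, hd2, hd3, hd4, hp0, hp1, hp2, hp3⟩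
    · omega
    · rcases eq_or_ne d 24 with h24 | h24
      · exact absurd (hd4 h24) (by norm_num)
      · omega
  have z5 : n 5 = 0 := by
    by_contra h
    rcases hk 5 h with ⟨h8, -⟩ | ⟨d, hd1, hd2, hd3, hd4, hp0, hp1, hp2, hp3⟩
    · omega
    · rcases eq_or_ne d 24 with h24 | h24
      · exact absurd (hd4 h24) (by norm_num)
      · omega
  have z6 : n 6 = 0 := by
    by_contra h
    rcases hk 6 h with ⟨h8, -⟩ | ⟨d, hd1, hd2, hd3, hd4, hp0, hp1, hp2, hp3⟩
    · omega
    · rcases eq_or_ne d 24 with h24 | h24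
      · exact absurd (hd4 h24) (by norm_num)
      · omega
  have z7 : n 7 = 0 := by
    by_contra h
    rcases hk 7 h with ⟨h8, -⟩ | ⟨d, hd1, hd2, hd3, hd4, hp0, hp1, hp2, hp3⟩
    · omega
    · rcases eq_or_ne d 24 with h24 | h24
      · exact absurd (hd4 h24) (by norm_num)
      · omega
  have z8 : n 8 = 0 := by
    by_contra h
    rcases hk 8 h with ⟨h8, -⟩ | ⟨d, hd1, hd2, hd3, hd4, hp0, hp1, hp2, hp3⟩
    · omega
    · rcases eq_or_ne d 24 with h24 | h24
      · exact absurd (hd4 h24) (by norm_num)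
      · omega
  omega

lemma no18 : NoW 18 := by
  intro CF hG z hz hw
  obtain ⟨n, heq, hk⟩ := master hG hz (fun d => d ≠ 10 ∧ d ≠ 14)
    (fun c hc hne => ⟨no10 _ (translate hG hz) _ (mem_translate hc), no14 _ (translate hG hz) _ (mem_translate hc)⟩)
  rw [hw] at heq hk
  have e0 := heq 0 (by norm_num)
  have e1 := heq 1 (by norm_num)
  have e2 := heq 2 (by norm_num)
  have e3 := heq 3 (by norm_num)
  have e4 := heq 4 (by norm_num)
  have e5 := heq 5 (by norm_num)
  simp only [Finset.sum_range_succ, Finset.sum_range_zero, Lfun] at e0 e1 e2 e3 e4 e5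
  norm_num [Nat.choose] at e0 e1 e2 e3 e4 e5
  have z0 : n 0 = 0 := by
    by_contra h
    rcases hk 0 h with ⟨h8, -⟩ | ⟨d, hd1, hd2, hd3, hd4, hp0, hp1⟩
    · omega
    · rcases eq_or_ne d 24 with h24 | h24
      · exact absurd (hd4 h24) (by norm_num)
      · omega
  have z1 : n 1 = 0 := by
    by_contra h
    rcases hk 1 h with ⟨h8, -⟩ | ⟨d, hd1, hd2, hd3, hd4, hp0, hp1⟩
    · omega
    · rcases eq_or_ne d 24 with h24 | h24
      · exact absurd (hd4 h24) (by norm_num)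
      · omega
  have z6 : n 6 = 0 := by
    by_contra h
    rcases hk 6 h with ⟨h8, -⟩ | ⟨d, hd1, hd2, hd3, hd4, hp0, hp1⟩
    · omega
    · rcases eq_or_ne d 24 with h24 | h24
      · exact absurd (hd4 h24) (by norm_num)
      · omega
  have z8 : n 8 = 0 := by
    by_contra h
    rcases hk 8 h with ⟨h8, -⟩ | ⟨d, hd1, hd2, hd3, hd4, hp0, hp1⟩
    · omega
    · rcases eq_or_ne d 24 with h24 | h24
      · exact absurd (hd4 h24) (by norm_num)
      · omega
  omega

lemma no19 : NoW 19 := by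
  intro CF hG z hz hw
  obtain ⟨n, heq, hk⟩ := master hG hz (fun d => d ≠ 11 ∧ d ≠ 13 ∧ d ≠ 15 ∧ d ≠ 17)
    (fun c hc hne => ⟨no11 _ (translate hG hz) _ (mem_translate hc), no13 _ (translate hG hz) _ (mem_translate hc), no15 _ (translate hG hz) _ (mem_translate hc), no17 _ (translate hG hz) _ (mem_translate hc)⟩)
  rw [hw] at heq hk
  have e0 := heq 0 (by norm_num)
  have e1 := heq 1 (by norm_num)
  have e2 := heq 2 (by norm_num)
  have e3 := heq 3 (by norm_num)
  have e4 := heq 4 (by norm_num)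
  have e5 := heq 5 (by norm_num)
  simp only [Finset.sum_range_succ, Finset.sum_range_zero, Lfun] at e0 e1 e2 e3 e4 e5
  norm_num [Nat.choose] at e0 e1 e2 e3 e4 e5
  have z0 : n 0 = 0 := by
    by_contra h
    rcases hk 0 h with ⟨h8, -⟩ | ⟨d, hd1, hd2, hd3, hd4, hp0, hp1, hp2, hp3⟩
    · omega
    · rcases eq_or_ne d 24 with h24 | h24
      · exact absurd (hd4 h24) (by norm_num)
      · omega
  have z1 : n 1 = 0 := by
    by_contra h
    rcases hk 1 h with ⟨h8, -⟩ | ⟨d, hd1, hd2, hd3, hd4, hp0, hp1, hp2, hp3⟩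
    · omega
    · rcases eq_or_ne d 24 with h24 | h24
      · exact absurd (hd4 h24) (by norm_num)
      · omega
  have z5 : n 5 = 0 := by
    by_contra h
    rcases hk 5 h with ⟨h8, -⟩ | ⟨d, hd1, hd2, hd3, hd4, hp0, hp1, hp2, hp3⟩
    · omega
    · rcases eq_or_ne d 24 with h24 | h24
      · exact absurd (hd4 h24) (by norm_num)
      · omega
  have z6 : n 6 = 0 := by
    by_contra h
    rcases hk 6 h with ⟨h8, -⟩ | ⟨d, hd1, hd2, hd3, hd4, hp0, hp1, hp2, hp3⟩
    · omega
    · rcases eq_or_ne d 24 with h24 | h24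
      · exact absurd (hd4 h24) (by norm_num)
      · omega
  have z7 : n 7 = 0 := by
    by_contra h
    rcases hk 7 h with ⟨h8, -⟩ | ⟨d, hd1, hd2, hd3, hd4, hp0, hp1, hp2, hp3⟩
    · omega
    · rcases eq_or_ne d 24 with h24 | h24
      · exact absurd (hd4 h24) (by norm_num)
      · omega
  have z8 : n 8 = 0 := by
    by_contra h
    rcases hk 8 h with ⟨h8, -⟩ | ⟨d, hd1, hd2, hd3, hd4, hp0, hp1, hp2, hp3⟩
    · omega
    · rcases eq_or_ne d 24 with h24 | h24
      · exact absurd (hd4 h24) (by norm_num)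
      · omega
  omega

lemma no21 : NoW 21 := by
  intro CF hG z hz hw
  obtain ⟨n, heq, hk⟩ := master hG hz (fun d => d ≠ 13 ∧ d ≠ 15 ∧ d ≠ 17 ∧ d ≠ 19)
    (fun c hc hne => ⟨no13 _ (translate hG hz) _ (mem_translate hc), no15 _ (translate hG hz) _ (mem_translate hc), no17 _ (translate hG hz) _ (mem_translate hc), no19 _ (translate hG hz) _ (mem_translate hc)⟩)
  rw [hw] at heq hk
  have e0 := heq 0 (by norm_num)
  have e1 := heq 1 (by norm_num)
  have e2 := heq 2 (by norm_num)
  have e3 := heq 3 (by norm_num)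
  have e4 := heq 4 (by norm_num)
  have e5 := heq 5 (by norm_num)
  simp only [Finset.sum_range_succ, Finset.sum_range_zero, Lfun] at e0 e1 e2 e3 e4 e5
  norm_num [Nat.choose] at e0 e1 e2 e3 e4 e5
  have z0 : n 0 = 0 := by
    by_contra h
    rcases hk 0 h with ⟨h8, -⟩ | ⟨d, hd1, hd2, hd3, hd4, hp0, hp1, hp2, hp3⟩
    · omega
    · rcases eq_or_ne d 24 with h24 | h24
      · exact absurd (hd4 h24) (by norm_num)
      · omega
  have z1 : n 1 = 0 := by
    by_contra h
    rcases hk 1 h with ⟨h8, -⟩ | ⟨d, hd1, hd2, hd3, hd4, hp0, hp1, hp2, hp3⟩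
    · omega
    · rcases eq_or_ne d 24 with h24 | h24
      · exact absurd (hd4 h24) (by norm_num)
      · omega
  have z2 : n 2 = 0 := by
    by_contra h
    rcases hk 2 h with ⟨h8, -⟩ | ⟨d, hd1, hd2, hd3, hd4, hp0, hp1, hp2, hp3⟩
    · omega
    · rcases eq_or_ne d 24 with h24 | h24
      · exact absurd (hd4 h24) (by norm_num)
      · omega
  have z5 : n 5 = 0 := by
    by_contra h
    rcases hk 5 h with ⟨h8, -⟩ | ⟨d, hd1, hd2, hd3, hd4, hp0, hp1, hp2, hp3⟩
    · omega
    · rcases eq_or_ne d 24 with h24 | h24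
      · exact absurd (hd4 h24) (by norm_num)
      · omega
  have z6 : n 6 = 0 := by
    by_contra h
    rcases hk 6 h with ⟨h8, -⟩ | ⟨d, hd1, hd2, hd3, hd4, hp0, hp1, hp2, hp3⟩
    · omega
    · rcases eq_or_ne d 24 with h24 | h24
      · exact absurd (hd4 h24) (by norm_num)
      · omega
  have z7 : n 7 = 0 := by
    by_contra h
    rcases hk 7 h with ⟨h8, -⟩ | ⟨d, hd1, hd2, hd3, hd4, hp0, hp1, hp2, hp3⟩
    · omega
    · rcases eq_or_ne d 24 with h24 | h24
      · exact absurd (hd4 h24) (by norm_num)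
      · omega
  have z8 : n 8 = 0 := by
    by_contra h
    rcases hk 8 h with ⟨h8, -⟩ | ⟨d, hd1, hd2, hd3, hd4, hp0, hp1, hp2, hp3⟩
    · omega
    · rcases eq_or_ne d 24 with h24 | h24
      · exact absurd (hd4 h24) (by norm_num)
      · omega
  omega

lemma no23 : NoW 23 := by
  intro CF hG z hz hw
  obtain ⟨n, heq, hk⟩ := master hG hz (fun d => d ≠ 15 ∧ d ≠ 17 ∧ d ≠ 19 ∧ d ≠ 21)
    (fun c hc hne => ⟨no15 _ (translate hG hz) _ (mem_translate hc), no17 _ (translate hG hz) _ (mem_translate hc), no19 _ (translate hG hz) _ (mem_translate hc), no21 _ (translate hG hz) _ (mem_translate hc)⟩)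
  rw [hw] at heq hk
  have e0 := heq 0 (by norm_num)
  have e1 := heq 1 (by norm_num)
  have e2 := heq 2 (by norm_num)
  have e3 := heq 3 (by norm_num)
  have e4 := heq 4 (by norm_num)
  have e5 := heq 5 (by norm_num)
  simp only [Finset.sum_range_succ, Finset.sum_range_zero, Lfun] at e0 e1 e2 e3 e4 e5
  norm_num [Nat.choose] at e0 e1 e2 e3 e4 e5
  have z0 : n 0 = 0 := by
    by_contra h
    rcases hk 0 h with ⟨h8, -⟩ | ⟨d, hd1, hd2, hd3, hd4, hp0, hp1, hp2, hp3⟩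
    · omega
    · rcases eq_or_ne d 24 with h24 | h24
      · exact absurd (hd4 h24) (by norm_num)
      · omega
  have z1 : n 1 = 0 := by
    by_contra h
    rcases hk 1 h with ⟨h8, -⟩ | ⟨d, hd1, hd2, hd3, hd4, hp0, hp1, hp2, hp3⟩
    · omega
    · rcases eq_or_ne d 24 with h24 | h24
      · exact absurd (hd4 h24) (by norm_num)
      · omega
  have z2 : n 2 = 0 := by
    by_contra h
    rcases hk 2 h with ⟨h8, -⟩ | ⟨d, hd1, hd2, hd3, hd4, hp0, hp1, hp2, hp3⟩
    · omega
    · rcases eq_or_ne d 24 with h24 | h24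
      · exact absurd (hd4 h24) (by norm_num)
      · omega
  have z3 : n 3 = 0 := by
    by_contra h
    rcases hk 3 h with ⟨h8, -⟩ | ⟨d, hd1, hd2, hd3, hd4, hp0, hp1, hp2, hp3⟩
    · omega
    · rcases eq_or_ne d 24 with h24 | h24
      · exact absurd (hd4 h24) (by norm_num)
      · omega
  have z5 : n 5 = 0 := by
    by_contra h
    rcases hk 5 h with ⟨h8, -⟩ | ⟨d, hd1, hd2, hd3, hd4, hp0, hp1, hp2, hp3⟩
    · omega
    · rcases eq_or_ne d 24 with h24 | h24
      · exact absurd (hd4 h24) (by norm_num)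
      · omega
  have z6 : n 6 = 0 := by
    by_contra h
    rcases hk 6 h with ⟨h8, -⟩ | ⟨d, hd1, hd2, hd3, hd4, hp0, hp1, hp2, hp3⟩
    · omega
    · rcases eq_or_ne d 24 with h24 | h24
      · exact absurd (hd4 h24) (by norm_num)
      · omega
  have z7 : n 7 = 0 := by
    by_contra h
    rcases hk 7 h with ⟨h8, -⟩ | ⟨d, hd1, hd2, hd3, hd4, hp0, hp1, hp2, hp3⟩
    · omega
    · rcases eq_or_ne d 24 with h24 | h24
      · exact absurd (hd4 h24) (by norm_num)
      · omega
  have z8 : n 8 = 0 := by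
    by_contra h
    rcases hk 8 h with ⟨h8, -⟩ | ⟨d, hd1, hd2, hd3, hd4, hp0, hp1, hp2, hp3⟩
    · omega
    · rcases eq_or_ne d 24 with h24 | h24
      · exact absurd (hd4 h24) (by norm_num)
      · omega
  omega

lemma no22 : NoW 22 := by
  intro CF hG z hz hw
  obtain ⟨n, heq, hk⟩ := master hG hz (fun d => d ≠ 14 ∧ d ≠ 18)
    (fun c hc hne => ⟨no14 _ (translate hG hz) _ (mem_translate hc), no18 _ (translate hG hz) _ (mem_translate hc)⟩)
  rw [hw] at heq hk
  have e0 := heq 0 (by norm_num)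
  have e1 := heq 1 (by norm_num)
  have e2 := heq 2 (by norm_num)
  have e3 := heq 3 (by norm_num)
  have e4 := heq 4 (by norm_num)
  have e5 := heq 5 (by norm_num)
  simp only [Finset.sum_range_succ, Finset.sum_range_zero, Lfun] at e0 e1 e2 e3 e4 e5
  norm_num [Nat.choose] at e0 e1 e2 e3 e4 e5
  have z0 : n 0 = 0 := by
    by_contra h
    rcases hk 0 h with ⟨h8, -⟩ | ⟨d, hd1, hd2, hd3, hd4, hp0, hp1⟩
    · omega
    · rcases eq_or_ne d 24 with h24 | h24
      · exact absurd (hd4 h24) (by norm_num)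
      · omega
  have z1 : n 1 = 0 := by
    by_contra h
    rcases hk 1 h with ⟨h8, -⟩ | ⟨d, hd1, hd2, hd3, hd4, hp0, hp1⟩
    · omega
    · rcases eq_or_ne d 24 with h24 | h24
      · exact absurd (hd4 h24) (by norm_num)
      · omega
  have z2 : n 2 = 0 := by
    by_contra h
    rcases hk 2 h with ⟨h8, -⟩ | ⟨d, hd1, hd2, hd3, hd4, hp0, hp1⟩
    · omega
    · rcases eq_or_ne d 24 with h24 | h24
      · exact absurd (hd4 h24) (by norm_num)
      · omega
  have z3 : n 3 = 0 := by
    by_contra h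
    rcases hk 3 h with ⟨h8, -⟩ | ⟨d, hd1, hd2, hd3, hd4, hp0, hp1⟩
    · omega
    · rcases eq_or_ne d 24 with h24 | h24
      · exact absurd (hd4 h24) (by norm_num)
      · omega
  have z6 : n 6 = 0 := by
    by_contra h
    rcases hk 6 h with ⟨h8, -⟩ | ⟨d, hd1, hd2, hd3, hd4, hp0, hp1⟩
    · omega
    · rcases eq_or_ne d 24 with h24 | h24
      · exact absurd (hd4 h24) (by norm_num)
      · omega
  have z8 : n 8 = 0 := by
    by_contra h
    rcases hk 8 h with ⟨h8, -⟩ | ⟨d, hd1, hd2, hd3, hd4, hp0, hp1⟩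
    · omega
    · rcases eq_or_ne d 24 with h24 | h24
      · exact absurd (hd4 h24) (by norm_num)
      · omega
  omega

lemma no20 : NoW 20 := by
  intro CF hG z hz hw
  obtain ⟨n, heq, hk⟩ := master hG hz (fun d => d ≠ 14 ∧ d ≠ 18 ∧ d ≠ 22)
    (fun c hc hne => ⟨no14 _ (translate hG hz) _ (mem_translate hc), no18 _ (translate hG hz) _ (mem_translate hc), no22 _ (translate hG hz) _ (mem_translate hc)⟩)
  rw [hw] at heq hk
  have e0 := heq 0 (by norm_num)
  have e1 := heq 1 (by norm_num)
  have e2 := heq 2 (by norm_num)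
  have e3 := heq 3 (by norm_num)
  have e4 := heq 4 (by norm_num)
  have e5 := heq 5 (by norm_num)
  simp only [Finset.sum_range_succ, Finset.sum_range_zero, Lfun] at e0 e1 e2 e3 e4 e5
  norm_num [Nat.choose] at e0 e1 e2 e3 e4 e5
  have z0 : n 0 = 0 := by
    by_contra h
    rcases hk 0 h with ⟨h8, -⟩ | ⟨d, hd1, hd2, hd3, hd4, hp0, hp1, hp2⟩
    · omega
    · rcases eq_or_ne d 24 with h24 | h24
      · exact absurd (hd4 h24) (by norm_num)
      · omega
  have z1 : n 1 = 0 := by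
    by_contra h
    rcases hk 1 h with ⟨h8, -⟩ | ⟨d, hd1, hd2, hd3, hd4, hp0, hp1, hp2⟩
    · omega
    · rcases eq_or_ne d 24 with h24 | h24
      · exact absurd (hd4 h24) (by norm_num)
      · omega
  have z2 : n 2 = 0 := by
    by_contra h
    rcases hk 2 h with ⟨h8, -⟩ | ⟨d, hd1, hd2, hd3, hd4, hp0, hp1, hp2⟩
    · omega
    · rcases eq_or_ne d 24 with h24 | h24
      · exact absurd (hd4 h24) (by norm_num)
      · omega
  have z3 : n 3 = 0 := by
    by_contra h
    rcases hk 3 h with ⟨h8, -⟩ | ⟨d, hd1, hd2, hd3, hd4, hp0, hp1, hp2⟩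
    · omega
    · rcases eq_or_ne d 24 with h24 | h24
      · exact absurd (hd4 h24) (by norm_num)
      · omega
  have z5 : n 5 = 0 := by
    by_contra h
    rcases hk 5 h with ⟨h8, -⟩ | ⟨d, hd1, hd2, hd3, hd4, hp0, hp1, hp2⟩
    · omega
    · rcases eq_or_ne d 24 with h24 | h24
      · exact absurd (hd4 h24) (by norm_num)
      · omega
  have z7 : n 7 = 0 := by
    by_contra h
    rcases hk 7 h with ⟨h8, -⟩ | ⟨d, hd1, hd2, hd3, hd4, hp0, hp1, hp2⟩
    · omega
    · rcases eq_or_ne d 24 with h24 | h24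
      · exact absurd (hd4 h24) (by norm_num)
      · omega
  omega

end GolayAux
namespace GolayAux
open Finset

lemma hammingDist_eq_sup_add (x y : V24) : hammingDist x y = (sup (x + y)).card := by
  rw [hammingDist]
  congr 1
  ext i
  simp only [mem_filter, mem_univ, true_and, mem_sup, Pi.add_apply]
  rcases zmod2_cases (x i) with h | h <;> rcases zmod2_cases (y i) with h' | h' <;>
    simp [h, h']

lemma hammingNorm_eq (x : V24) : hammingNorm x = (sup x).card := by
  rw [hammingNorm]
  congr 1
  ext i
  simp only [mem_filter, mem_univ, true_and, mem_sup]
  rcases zmod2_cases (x i) with h | h <;> simp [h]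

lemma sup_zero : sup (0 : V24) = ∅ := by
  ext i; simp [mem_sup]

lemma weights {CF : Finset V24} (hG : GoodF CF) {z : V24} (hz : z ∈ CF) :
    (sup z).card = 0 ∨ (sup z).card = 8 ∨ (sup z).card = 12 ∨
      (sup z).card = 16 ∨ (sup z).card = 24 := by
  rcases eq_or_ne z 0 with rfl | hz0
  · left; rw [sup_zero]; rfl
  · have h8 : 8 ≤ (sup z).card := by
      have := hG.2.2 0 hG.2.1 z hz (Ne.symm hz0)
      rwa [zero_add] at this
    have h24 : (sup z).card ≤ 24 := by
      have : (sup z).card ≤ (Finset.univ : Finset (Fin 24)).card :=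
        Finset.card_le_card (Finset.subset_univ _)
      simpa using this
    have l9 := no9 CF hG z hz
    have l10 := no10 CF hG z hz
    have l11 := no11 CF hG z hz
    have l13 := no13 CF hG z hz
    have l14 := no14 CF hG z hz
    have l15 := no15 CF hG z hz
    have l17 := no17 CF hG z hz
    have l18 := no18 CF hG z hz
    have l19 := no19 CF hG z hz
    have l20 := no20 CF hG z hz
    have l21 := no21 CF hG z hz
    have l22 := no22 CF hG z hz
    have l23 := no23 CF hG z hz
    omega

end GolayAux

namespace GolayAux
open Finset

lemma sum_mul_eq_card_inter (x y : V24) :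
    ∑ i, x i * y i = (((sup x) ∩ (sup y)).card : ZMod 2) := by
  have h : ∀ i, x i * y i = if i ∈ sup x ∩ sup y then (1 : ZMod 2) else 0 := by
    intro i
    simp only [Finset.mem_inter, sup, mem_filter, mem_univ, true_and]
    rcases zmod2_cases (x i) with h | h <;> rcases zmod2_cases (y i) with h' | h' <;>
      simp [h, h']
  rw [Finset.sum_congr rfl (fun i _ => h i)]
  rw [Finset.sum_ite_mem, Finset.univ_inter, Finset.sum_const, nsmul_eq_mul, mul_one]

def dotForm : LinearMap.BilinForm (ZMod 2) V24 :=
  LinearMap.mk₂ (ZMod 2) (fun x y => ∑ i, x i * y i)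
    (fun x x' y => by simp [add_mul, Finset.sum_add_distrib])
    (fun c x y => by simp [Finset.mul_sum, mul_assoc])
    (fun x y y' => by simp [mul_add, Finset.sum_add_distrib])
    (fun c x y => by simp [Finset.mul_sum]; apply Finset.sum_congr rfl; intros; ring)

lemma dotForm_apply (x y : V24) : dotForm x y = ∑ i, x i * y i := rfl

lemma dotForm_comm (x y : V24) : dotForm x y = dotForm y x := by
  simp only [dotForm_apply]
  exact Finset.sum_congr rfl (fun i _ => mul_comm _ _)

lemma dotForm_nondeg : dotForm.Nondegenerate := by
  refine ⟨fun x hx => ?_, fun x hx => ?_⟩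
  swap
  · funext i
    have := hx (Pi.single i 1)
    rw [dotForm_apply] at this
    simp only [Pi.single_apply] at this
    rw [Finset.sum_eq_single i (fun j _ hj => by simp [hj]) (by simp)] at this
    simpa using this
  funext i
  have := hx (Pi.single i 1)
  rw [dotForm_apply] at this
  simp only [Pi.single_apply] at this
  rw [Finset.sum_eq_single i (fun j _ hj => by simp [hj]) (by simp)] at this
  simpa using this

lemma dotForm_refl : dotForm.IsRefl := by
  intro x y h
  rw [dotForm_comm] at h
  exact h

end GolayAux

namespace GolayAux
open Finset Module

lemma main_algebra (C : Set V24) (hcard : Nat.card C = 4096)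
    (horth : ∀ x ∈ C, ∀ y ∈ C, ∑ i, x i * y i = 0) :
    ∃ D : Submodule (ZMod 2) V24, (D : Set V24) = C ∧
      C = {x | ∀ y ∈ C, ∑ i, x i * y i = 0} := by
  classical
  set W := Submodule.span (ZMod 2) C with hW
  set D := dotForm.orthogonal W with hD
  have hset : {x : V24 | ∀ y ∈ C, ∑ i, x i * y i = 0} = ↑D := by
    ext x
    simp only [Set.mem_setOf_eq, SetLike.mem_coe, hD,
      LinearMap.BilinForm.mem_orthogonal_iff]
    constructor
    · intro hx n hn
      induction hn using Submodule.span_induction with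
      | mem z hz =>
        show dotForm z x = 0
        rw [dotForm_comm, dotForm_apply]
        exact hx z hz
      | zero => simp [LinearMap.BilinForm.IsOrtho]
      | add a b _ _ ha hb =>
        show dotForm (a + b) x = 0
        rw [map_add, LinearMap.add_apply, ha, hb, add_zero]
      | smul c a _ ha =>
        show dotForm (c • a) x = 0
        rw [map_smul, LinearMap.smul_apply, ha, smul_zero]
    · intro hx y hy
      have := hx y (Submodule.subset_span hy)
      rw [dotForm_comm, dotForm_apply] at this
      exact this
  have hCsub : C ⊆ ↑D := by
    rw [← hset]
    intro x hx y hy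
    exact horth x hx y hy
  -- finrank bounds
  haveI : Fintype ↥W := Fintype.ofFinite _
  haveI : Fintype ↥D := Fintype.ofFinite _
  have hWrank : 12 ≤ finrank (ZMod 2) W := by
    have h1 : (4096 : ℕ) ≤ Nat.card ↥W := by
      rw [← hcard]
      exact Nat.card_mono (Set.toFinite _) Submodule.subset_span
    have h2 : Nat.card ↥W = 2 ^ finrank (ZMod 2) W := by
      rw [Nat.card_eq_fintype_card, card_eq_pow_finrank (K := ZMod 2), ZMod.card]
    rw [h2] at h1
    have h3 : (2:ℕ) ^ 12 ≤ 2 ^ finrank (ZMod 2) W := by norm_num; omega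
    exact (Nat.pow_le_pow_iff_right (by norm_num : 1 < 2)).mp h3
  have hDrank : finrank (ZMod 2) D ≤ 12 := by
    rw [hD, LinearMap.BilinForm.finrank_orthogonal dotForm_nondeg W]
    have : finrank (ZMod 2) V24 = 24 := Module.finrank_fin_fun (ZMod 2)
    omega
  have hDcard : Nat.card ↥D ≤ 4096 := by
    have h2 : Nat.card ↥D = 2 ^ finrank (ZMod 2) D := by
      rw [Nat.card_eq_fintype_card, card_eq_pow_finrank (K := ZMod 2), ZMod.card]
    rw [h2]
    calc 2 ^ finrank (ZMod 2) D ≤ 2 ^ 12 := Nat.pow_le_pow_right (by norm_num) hDrank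
    _ = 4096 := by norm_num
  have hfinal : C = ↑D := by
    apply Set.eq_of_subset_of_ncard_le hCsub _ (Set.toFinite _)
    · rw [← Nat.card_coe_set_eq, ← Nat.card_coe_set_eq, hcard]
      exact hDcard
  exact ⟨D, hfinal.symm, by rw [hset, hfinal]⟩

end GolayAux


open GolayAux in
/-- Any binary code with 4096 codewords, length 24, containing 0, with minimum
distance 8, has weights only in {0,8,12,16,24}, is self-orthogonal, linear, and
self-dual. -/
theorem golay_like_code_selfdual (C : Set (Fin 24 → ZMod 2))
    (hcard : Nat.card C = 4096) (h0 : (0 : Fin 24 → ZMod 2) ∈ C)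
    (hd : ∀ x ∈ C, ∀ y ∈ C, x ≠ y → 8 ≤ hammingDist x y) :
    (∀ x ∈ C, hammingNorm x = 0 ∨ hammingNorm x = 8 ∨ hammingNorm x = 12 ∨
      hammingNorm x = 16 ∨ hammingNorm x = 24) ∧
    (∀ x ∈ C, ∀ y ∈ C, ∑ i, x i * y i = 0) ∧
    (∃ D : Submodule (ZMod 2) (Fin 24 → ZMod 2), (D : Set (Fin 24 → ZMod 2)) = C) ∧
    C = {x | ∀ y ∈ C, ∑ i, x i * y i = 0} := by
  classical
  have hfinC : C.Finite := Set.toFinite C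
  set CF : Finset V24 := hfinC.toFinset with hCF
  have hmem : ∀ x : V24, x ∈ CF ↔ x ∈ C := fun x => Set.Finite.mem_toFinset hfinC
  have hG : GoodF CF := by
    refine ⟨?_, (hmem 0).mpr h0, ?_⟩
    · rw [← Set.ncard_eq_toFinset_card C hfinC, ← Nat.card_coe_set_eq, hcard]
    · intro x hx y hy hne
      have := hd x ((hmem x).mp hx) y ((hmem y).mp hy) hne
      rwa [hammingDist_eq_sup_add] at this
  have horth : ∀ x ∈ C, ∀ y ∈ C, ∑ i, x i * y i = 0 := by
    intro x hx y hy
    have hx' := (hmem x).mpr hx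
    have hy' := (hmem y).mpr hy
    have wx := weights hG hx'
    have wy := weights hG hy'
    have wxy : (sup (x+y)).card = 0 ∨ (sup (x+y)).card = 8 ∨ (sup (x+y)).card = 12 ∨
        (sup (x+y)).card = 16 ∨ (sup (x+y)).card = 24 := by
      rcases eq_or_ne x y with rfl | hne
      · left; rw [GolayAux.add_self, GolayAux.sup_zero]; rfl
      · exact weights (translate hG hy') (mem_translate hx')
    have hsymmd := card_symmDiff (sup x) (sup y)
    rw [← GolayAux.sup_add] at hsymmd
    obtain ⟨m, hm⟩ : ∃ m, (sup x ∩ sup y).card = 2 * m := by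
      have : (sup x ∩ sup y).card % 2 = 0 := by omega
      exact ⟨(sup x ∩ sup y).card / 2, by omega⟩
    rw [sum_mul_eq_card_inter, hm]
    push_cast
    rw [show ((2:ZMod 2)) = 0 by decide]
    ring
  obtain ⟨D, hD1, hD2⟩ := main_algebra C hcard horth
  refine ⟨?_, horth, ⟨D, hD1⟩, hD2⟩
  intro x hx
  rw [hammingNorm_eq]
  exact weights hG ((hmem x).mpr hx)
end

section
/- If an incidence matrix of a projective plane of order n with n ≡ 2 (mod 4) generates a binary code C of length n²+n+1, then the extended code C̄ is self-orthogonal; consequently the dimension of C is at most (n² + n + 2)/2. -/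
/-- For a projective plane of order n ≡ 2 (mod 4), the extension of the binary
code generated by the rows of an incidence matrix is self-orthogonal, and the
code has dimension at most (n²+n+2)/2. -/
theorem projective_plane_code {n : ℕ} (hn : n % 4 = 2)
    (B : Finset (Finset (Fin (n ^ 2 + n + 1))))
    (hk : ∀ b ∈ B, b.card = n + 1)
    (h2 : ∀ x y : Fin (n ^ 2 + n + 1), x ≠ y →
      (B.filter fun b => x ∈ b ∧ y ∈ b).card = 1) :
    let C := Submodule.span (ZMod 2)
      {x : Fin (n ^ 2 + n + 1) → ZMod 2 | ∃ b ∈ B, x = fun p => if p ∈ b then 1 else 0}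
    (∀ u ∈ C, ∀ w ∈ C,
        ∑ i, Fin.snoc u (∑ j, u j) i * Fin.snoc w (∑ j, w j) i = (0 : ZMod 2)) ∧
      Module.finrank (ZMod 2) C ≤ (n ^ 2 + n + 2) / 2 := by
  intro C
  have hnpos : 0 < n := by omega
  have hn2 : n % 2 = 0 := by omega
  -- at most one common point of two distinct blocks
  have atmost : ∀ b ∈ B, ∀ c ∈ B, b ≠ c → ∀ y z : Fin (n ^ 2 + n + 1), y ∈ b → y ∈ c →
      z ∈ b → z ∈ c → y = z := by
    intro b hb c hc hbc y z hyb hyc hzb hzc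
    by_contra hyz
    have h1 := h2 y z hyz
    have hsub : ({b, c} : Finset (Finset (Fin (n ^ 2 + n + 1)))) ⊆
        B.filter fun d => y ∈ d ∧ z ∈ d := by
      intro d hd
      simp only [Finset.mem_insert, Finset.mem_singleton] at hd
      rcases hd with rfl | rfl <;> simp [Finset.mem_filter, hb, hc, hyb, hzb, hyc, hzc]
    have := Finset.card_le_card hsub
    rw [h1, Finset.card_pair hbc] at this
    omega
  -- number of blocks through a point
  have hline : ∀ x : Fin (n ^ 2 + n + 1), (B.filter fun b => x ∈ b).card = n + 1 := by
    intro x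
    have hdouble : ∑ d ∈ B.filter (fun b => x ∈ b), ((d.erase x).card) =
        ∑ y ∈ Finset.univ.erase x, (B.filter fun b => x ∈ b ∧ y ∈ b).card := by
      simp only [Finset.card_eq_sum_ones]
      refine Finset.sum_comm' ?_
      intro d y
      simp only [Finset.mem_filter, Finset.mem_erase, Finset.mem_univ]
      tauto
    have hL : ∑ d ∈ B.filter (fun b => x ∈ b), ((d.erase x).card) =
        (B.filter (fun b => x ∈ b)).card * n := by
      have hstep : ∀ d ∈ B.filter (fun b => x ∈ b), (d.erase x).card = n := by
        intro d hd
        simp only [Finset.mem_filter] at hd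
        rw [Finset.card_erase_of_mem hd.2, hk d hd.1]
        omega
      rw [Finset.sum_congr rfl hstep, Finset.sum_const, smul_eq_mul]
    have hR : ∑ y ∈ Finset.univ.erase x, (B.filter fun b => x ∈ b ∧ y ∈ b).card =
        n ^ 2 + n := by
      rw [Finset.sum_congr rfl (fun y hy => h2 x y (Ne.symm (Finset.mem_erase.mp hy).1)),
        Finset.sum_const, smul_eq_mul, mul_one, Finset.card_erase_of_mem (Finset.mem_univ x),
        Finset.card_univ, Fintype.card_fin]
      omega
    have : (B.filter (fun b => x ∈ b)).card * n = (n + 1) * n := by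
      rw [← hL, hdouble, hR]; ring
    exact Nat.eq_of_mul_eq_mul_right hnpos this
  -- two distinct blocks meet in exactly one point
  have hmeet : ∀ b ∈ B, ∀ c ∈ B, b ≠ c → (b ∩ c).card = 1 := by
    intro b hb c hc hbc
    rcases (b ∩ c).eq_empty_or_nonempty with hbc0 | ⟨x0, hx0⟩
    · exfalso
      -- b and c disjoint : contradiction by counting lines through a point of b
      obtain ⟨x, hxb⟩ : b.Nonempty := by
        rw [← Finset.card_pos, hk b hb]; omega
      have hxc : x ∉ c := by
        intro hxc
        have : x ∈ b ∩ c := Finset.mem_inter.mpr ⟨hxb, hxc⟩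
        rw [hbc0] at this; exact absurd this (Finset.notMem_empty x)
      classical
      set f : Fin (n ^ 2 + n + 1) → Finset (Fin (n ^ 2 + n + 1)) := fun y =>
        if h : (B.filter fun d => x ∈ d ∧ y ∈ d).Nonempty then h.choose else ∅ with hf
      have hfy : ∀ y ∈ c, f y ∈ B ∧ x ∈ f y ∧ y ∈ f y := by
        intro y hy
        have hxy : x ≠ y := fun h => hxc (h ▸ hy)
        have hne : (B.filter fun d => x ∈ d ∧ y ∈ d).Nonempty := by
          rw [← Finset.card_pos, h2 x y hxy]; omega
        have := hne.choose_spec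
        simp only [Finset.mem_filter] at this
        simp only [hf, dif_pos hne]
        exact ⟨this.1, this.2.1, this.2.2⟩
      have hmaps : ∀ y ∈ c, f y ∈ (B.filter fun d => x ∈ d).erase b := by
        intro y hy
        obtain ⟨h1, h3, h4⟩ := hfy y hy
        refine Finset.mem_erase.mpr ⟨?_, Finset.mem_filter.mpr ⟨h1, h3⟩⟩
        intro h
        have : y ∈ b ∩ c := Finset.mem_inter.mpr ⟨h ▸ h4, hy⟩
        rw [hbc0] at this; exact absurd this (Finset.notMem_empty y)
      have hinj : Set.InjOn f c := by
        intro y hy z hz hfyz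
        obtain ⟨h1, h3, h4⟩ := hfy y hy
        obtain ⟨h1', h3', h4'⟩ := hfy z hz
        have hdc : f y ≠ c := fun h => hxc (h ▸ h3)
        exact atmost (f y) h1 c hc hdc y z h4 hy (hfyz ▸ h4') hz
      have hcard := Finset.card_le_card_of_injOn f hmaps hinj
      rw [hk c hc, Finset.card_erase_of_mem
        (Finset.mem_filter.mpr ⟨hb, hxb⟩), hline x] at hcard
      omega
    · rw [Finset.card_eq_one]
      refine ⟨x0, ?_⟩
      ext y
      simp only [Finset.mem_inter, Finset.mem_singleton]
      constructor
      · rintro ⟨hyb, hyc⟩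
        exact atmost b hb c hc hbc y x0 hyb hyc (Finset.mem_inter.mp hx0).1
          (Finset.mem_inter.mp hx0).2
      · rintro rfl
        exact Finset.mem_inter.mp hx0
  -- the quadratic pairing
  set Q : (Fin (n ^ 2 + n + 1) → ZMod 2) → (Fin (n ^ 2 + n + 1) → ZMod 2) → ZMod 2 :=
    fun u w => (∑ i, u i * w i) + (∑ j, u j) * (∑ j, w j) with hQ
  have hgen : ∀ u ∈ C, ∀ w ∈ C, Q u w = 0 := by
    intro u hu w hw
    induction hu, hw using Submodule.span_induction₂ with
    | mem_mem u w hu hw =>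
      obtain ⟨b, hb, rfl⟩ := hu
      obtain ⟨c, hc, rfl⟩ := hw
      have key : ∀ s : Finset (Fin (n ^ 2 + n + 1)),
          (∑ i, (if i ∈ s then (1 : ZMod 2) else 0)) = (s.card : ZMod 2) := by
        intro s
        rw [Finset.sum_boole, Finset.filter_univ_mem]
      have key2 : (∑ i, (if i ∈ b then (1 : ZMod 2) else 0) *
          (if i ∈ c then (1 : ZMod 2) else 0)) = (((b ∩ c).card : ℕ) : ZMod 2) := by
        have : ∀ i, (if i ∈ b then (1 : ZMod 2) else 0) *
            (if i ∈ c then (1 : ZMod 2) else 0) = if i ∈ b ∩ c then 1 else 0 := by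
          intro i
          by_cases h1 : i ∈ b <;> by_cases h2 : i ∈ c <;>
            simp [h1, h2, Finset.mem_inter]
        rw [Finset.sum_congr rfl fun i _ => this i, Finset.sum_boole,
          Finset.filter_univ_mem]
      have hcast : ∀ k : ℕ, k % 2 = 1 → ((k : ℕ) : ZMod 2) = 1 := by
        intro k hk1
        rw [← ZMod.natCast_mod k 2, hk1, Nat.cast_one]
      have hodd1 : ((b.card : ℕ) : ZMod 2) = 1 :=
        hcast _ (by rw [hk b hb]; omega)
      have hodd2 : ((c.card : ℕ) : ZMod 2) = 1 :=
        hcast _ (by rw [hk c hc]; omega)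
      have hodd3 : (((b ∩ c).card : ℕ) : ZMod 2) = 1 := by
        rcases eq_or_ne b c with rfl | hbc
        · rw [Finset.inter_self]; exact hodd1
        · exact hcast _ (by rw [hmeet b hb c hc hbc])
      simp only [hQ, key, key2, hodd1, hodd2, hodd3]
      decide
    | zero_left w hw => simp [hQ]
    | zero_right u hu => simp [hQ]
    | add_left u v w hu hv hw ih1 ih2 =>
      have : Q (u + v) w = Q u w + Q v w := by
        simp only [hQ, Pi.add_apply, add_mul, Finset.sum_add_distrib]
        ring
      rw [this, ih1, ih2, add_zero]
    | add_right u v w hu hv hw ih1 ih2 =>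
      have : Q u (v + w) = Q u v + Q u w := by
        simp only [hQ, Pi.add_apply, mul_add, Finset.sum_add_distrib]
        ring
      rw [this, ih1, ih2, add_zero]
    | smul_left a u w hu hw ih =>
      have ha : ∀ z : ZMod 2, z = 0 ∨ z = 1 := by decide
      rcases ha a with rfl | rfl
      · simp [hQ]
      · rw [one_smul]; exact ih
    | smul_right a u w hu hw ih =>
      have ha : ∀ z : ZMod 2, z = 0 ∨ z = 1 := by decide
      rcases ha a with rfl | rfl
      · simp [hQ]
      · rw [one_smul]; exact ih
  have hsnoc : ∀ u w : Fin (n ^ 2 + n + 1) → ZMod 2,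
      (∑ i : Fin (n ^ 2 + n + 1 + 1), (Fin.snoc u (∑ j, u j) : Fin (n ^ 2 + n + 1 + 1) → ZMod 2) i *
        (Fin.snoc w (∑ j, w j) : Fin (n ^ 2 + n + 1 + 1) → ZMod 2) i) = Q u w := by
    intro u w
    rw [Fin.sum_univ_castSucc]
    simp [hQ]
  have part1 : ∀ u ∈ C, ∀ w ∈ C,
      ∑ i, Fin.snoc u (∑ j, u j) i * Fin.snoc w (∑ j, w j) i = (0 : ZMod 2) := by
    intro u hu w hw
    rw [hsnoc]
    exact hgen u hu w hw
  refine ⟨part1, ?_⟩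
  -- the extension map
  classical
  set E : (Fin (n ^ 2 + n + 1) → ZMod 2) →ₗ[ZMod 2] (Fin (n ^ 2 + n + 1 + 1) → ZMod 2) :=
    { toFun := fun u => Fin.snoc u (∑ j, u j)
      map_add' := by
        intro u v
        funext i
        refine Fin.lastCases ?_ ?_ i
        · simp [Finset.sum_add_distrib]
        · intro j; simp
      map_smul' := by
        intro a u
        funext i
        refine Fin.lastCases ?_ ?_ i
        · simp [Finset.mul_sum]
        · intro j; simp } with hE
  have hEinj : Function.Injective E := by
    intro u v h
    funext i
    have := congrFun h (Fin.castSucc i)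
    simpa [hE, Fin.snoc_castSucc] using this
  set D : Submodule (ZMod 2) (Fin (n ^ 2 + n + 1 + 1) → ZMod 2) := C.map E with hD
  have hrankCD : Module.finrank (ZMod 2) C = Module.finrank (ZMod 2) D :=
    LinearEquiv.finrank_eq (Submodule.equivMapOfInjective E hEinj C)
  -- the dot product map into the dual
  set ι : (Fin (n ^ 2 + n + 1 + 1) → ZMod 2) →ₗ[ZMod 2]
      Module.Dual (ZMod 2) (Fin (n ^ 2 + n + 1 + 1) → ZMod 2) :=
    { toFun := fun v =>
        { toFun := fun w => ∑ i, v i * w i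
          map_add' := by intro w w'; simp [mul_add, Finset.sum_add_distrib]
          map_smul' := by
            intro a w
            simp [Finset.mul_sum, mul_left_comm] }
      map_add' := by
        intro v v'
        ext w
        simp [add_mul, Finset.sum_add_distrib]
      map_smul' := by
        intro a v
        ext w
        simp [Finset.mul_sum, mul_assoc] } with hι
  have hιinj : Function.Injective ι := by
    intro v v' h
    funext i
    have := congrFun (congrArg DFunLike.coe h) (Pi.single i 1)
    simp only [hι, LinearMap.coe_mk, AddHom.coe_mk] at this
    have hsingle : ∀ u : Fin (n ^ 2 + n + 1 + 1) → ZMod 2,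
        (∑ j, u j * (Pi.single i (1 : ZMod 2) : Fin (n ^ 2 + n + 1 + 1) → ZMod 2) j) = u i := by
      intro u
      simp only [Pi.single_apply, mul_ite, mul_one, mul_zero]
      rw [Finset.sum_ite_eq' Finset.univ i u]
      simp
    rw [hsingle, hsingle] at this
    exact this
  have hortho : D.map ι ≤ D.dualAnnihilator := by
    rintro φ hφ
    obtain ⟨v, hv, rfl⟩ := hφ
    rw [Submodule.mem_dualAnnihilator]
    rintro w hw
    obtain ⟨u1, hu1, rfl⟩ := hv
    obtain ⟨u2, hu2, rfl⟩ := hw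
    simpa [hι, hE] using part1 u1 hu1 u2 hu2
  have hrank2 : Module.finrank (ZMod 2) D = Module.finrank (ZMod 2) (D.map ι) :=
    LinearEquiv.finrank_eq (Submodule.equivMapOfInjective ι hιinj D)
  have hrank3 : Module.finrank (ZMod 2) (D.map ι) ≤
      Module.finrank (ZMod 2) D.dualAnnihilator :=
    Submodule.finrank_mono hortho
  have hrank4 : Module.finrank (ZMod 2) D.dualAnnihilator +
      Module.finrank (ZMod 2) D = n ^ 2 + n + 1 + 1 := by
    have hq := Submodule.finrank_quotient_add_finrank D
    have he : Module.finrank (ZMod 2) D.dualAnnihilator =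
        Module.finrank (ZMod 2) ((Fin (n ^ 2 + n + 1 + 1) → ZMod 2) ⧸ D) :=
      (LinearEquiv.finrank_eq (Subspace.quotEquivAnnihilator D)).symm
    rw [he, hq, Module.finrank_fin_fun]
  have : 2 * Module.finrank (ZMod 2) C ≤ n ^ 2 + n + 1 + 1 := by omega
  omega
end
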